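/- With $D = \frac{e^{1-\gamma/2}}{\sqrt{2}}$ and $R_n$ defined via the blocks $B_k$, for every $n \ge 2$ one has $R_{n+1} - R_n < \frac{0.87}{n^{0.473678}}$. -/

import Mathlib

open Real

noncomputable def Rseq (D : ℝ) (n : ℕ) : ℝ :=
  if n ≤ 1 then 1
  else Real.sqrt 2 * (D ^ (Nat.clog 2 n - 1) +
    ((n : ℝ) - 2 ^ (Nat.clog 2 n - 1) - 1) *
      (D ^ Nat.clog 2 n - D ^ (Nat.clog 2 n - 1)) / 2 ^ (Nat.clog 2 n - 1))


noncomputable def Fc (m : ℕ) : ℝ := 1/(2*m) + 1/(12*m^2) - 1/(2*m^3)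

lemma log_one_add_inv_le {x : ℝ} (hx : 1 < x) :
    Real.log (1 + 1/x) ≤ 1/x - 1/(2*x^2) + 1/(3*x^3) + 1/(x^3*(x-1)) := by
  have hx0 : 0 < x := by linarith
  have h1 : |(-(1/x))| < 1 := by
    rw [abs_neg, abs_of_pos (by positivity)]
    rw [div_lt_one hx0]; linarith
  have h := Real.abs_log_sub_add_sum_range_le h1 3
  rw [show (1 : ℝ) - -(1/x) = 1 + 1/x by ring] at h
  have hsum : (∑ i ∈ Finset.range 3, (-(1/x)) ^ (i+1) / (i+1)) = -(1/x) + 1/(2*x^2) - 1/(3*x^3) := by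
    norm_num [Finset.sum_range_succ]
    ring
  rw [hsum] at h
  have habs : |(-(1/x))| = 1/x := by
    rw [abs_neg, abs_of_pos (by positivity)]
  rw [habs] at h
  have h2 := (abs_le.1 h).2
  have hkey : (1/x)^(3+1) / (1 - 1/x) = 1/(x^3*(x-1)) := by
    have hne : x ≠ 0 := ne_of_gt hx0
    have hne1 : x - 1 ≠ 0 := by intro hc; apply absurd hx; intro _; linarith
    rw [show (1:ℝ) - 1/x = (x-1)/x by field_simp]
    field_simp
    ring_nf
    rw [← mul_pow, mul_inv_cancel₀ hne, one_pow]
  rw [hkey] at h2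
  linarith


lemma step_lemma {m : ℕ} (hm : 15 ≤ m) :
    Fc m - Fc (m+1) ≤ 1/(m:ℝ) - (Real.log ((m:ℝ)+1) - Real.log (m:ℝ)) := by
  have hx : (15:ℝ) ≤ (m:ℝ) := by exact_mod_cast hm
  set x : ℝ := (m:ℝ) with hxdef
  have hx1 : 1 < x := by linarith
  have hx0 : 0 < x := by linarith
  have hlog : Real.log (x+1) - Real.log x = Real.log (1 + 1/x) := by
    rw [show 1 + 1/x = (x+1)/x by field_simp, Real.log_div (by linarith) (ne_of_gt hx0)]
  have hlb : Real.log (1 + 1/x) ≤ 1/x - 1/(2*x^2) + 1/(3*x^3) + 1/(x^3*(x-1)) := by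
    exact log_one_add_inv_le hx1
  have hFc : Fc m - Fc (m+1) = (1/(2*x) + 1/(12*x^2) - 1/(2*x^3))
      - (1/(2*(x+1)) + 1/(12*(x+1)^2) - 1/(2*(x+1)^3)) := by
    simp only [Fc, hxdef]
    push_cast
    ring
  rw [hlog, hFc]
  have hxm1 : (0:ℝ) < x - 1 := by linarith
  have hrat : (1/(2*x) + 1/(12*x^2) - 1/(2*x^3))
      - (1/(2*(x+1)) + 1/(12*(x+1)^2) - 1/(2*(x+1)^3))
      ≤ 1/(2*x^2) - 1/(3*x^3) - 1/(x^3*(x-1)) := by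
    have hden : (0:ℝ) < 12*x^3*(x+1)^3*(x-1) := by
      apply mul_pos (by positivity) hxm1
    have hnum : (0:ℝ) ≤ 3*x^3 - 40*x^2 - 45*x - 14 := by
      nlinarith [sq_nonneg (x - 15), sq_nonneg x]
    have key : (1/(2*x^2) - 1/(3*x^3) - 1/(x^3*(x-1)))
        - ((1/(2*x) + 1/(12*x^2) - 1/(2*x^3))
          - (1/(2*(x+1)) + 1/(12*(x+1)^2) - 1/(2*(x+1)^3)))
        = (3*x^3 - 40*x^2 - 45*x - 14)/(12*x^3*(x+1)^3*(x-1)) := by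
      field_simp
      ring
    have : (0:ℝ) ≤ (3*x^3 - 40*x^2 - 45*x - 14)/(12*x^3*(x+1)^3*(x-1)) :=
      div_nonneg hnum (le_of_lt hden)
    linarith
  linarith

lemma seq_ge (N : ℕ) (hN : 255 ≤ N) :
    Real.eulerMascheroniSeq 255 + (Fc 256 - Fc (N+1)) ≤ Real.eulerMascheroniSeq N := by
  induction N, hN using Nat.le_induction with
  | base => norm_num
  | succ N hN ih =>
    have hs := step_lemma (m := N+1) (by omega)
    have hseq : Real.eulerMascheroniSeq (N+1) = Real.eulerMascheroniSeq N
        + (1/((N:ℝ)+1) - (Real.log ((N:ℝ)+1+1) - Real.log ((N:ℝ)+1))) := by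
      simp only [Real.eulerMascheroniSeq, harmonic_succ]
      push_cast
      ring
    rw [hseq]
    push_cast at hs
    linarith

lemma gamma_gt : (0.57721562:ℝ) < Real.eulerMascheroniConstant := by
  have h1 := seq_ge (10^9) (by norm_num)
  have h2 := Real.eulerMascheroniSeq_lt_eulerMascheroniConstant (10^9)
  have hH : harmonic 255 = (51027599525520583018489421702525146204109415815298620211423618305671294477336960957168704870301594661489522171 : ℚ)/8337245403447921335829504375888192675135162254454825924977726845769444687965016467695833282339504042669808000 := by
    norm_num [harmonic, Finset.sum_range_succ]
  have hseq255 : Real.eulerMascheroniSeq 255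
      = (51027599525520583018489421702525146204109415815298620211423618305671294477336960957168704870301594661489522171 : ℝ)/8337245403447921335829504375888192675135162254454825924977726845769444687965016467695833282339504042669808000 - 8 * Real.log 2 := by
    rw [Real.eulerMascheroniSeq, hH]
    rw [show ((255:ℕ):ℝ)+1 = 2^8 by norm_num, Real.log_pow]
    push_cast
    ring
  have hlog2 := Real.log_two_lt_d9
  have hF256 : Fc 256 = 1/512 + 1/786432 - 1/33554432 := by
    norm_num [Fc]
  have hFbig : Fc (10^9+1) = 1/(2*(10^9+1)) + 1/(12*(10^9+1)^2) - 1/(2*(10^9+1)^3) := by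
    norm_num [Fc]
  have hkey : Real.eulerMascheroniSeq 255 + (Fc 256 - Fc (10^9+1)) < Real.eulerMascheroniConstant :=
    lt_of_le_of_lt h1 h2
  rw [hseq255, hF256, hFbig] at hkey
  have : (0.57721562:ℝ) ≤ (51027599525520583018489421702525146204109415815298620211423618305671294477336960957168704870301594661489522171 : ℝ)/8337245403447921335829504375888192675135162254454825924977726845769444687965016467695833282339504042669808000 - 8 * 0.6931471808
      + (1/512 + 1/786432 - 1/33554432 - (1/(2*(10^9+1)) + 1/(12*(10^9+1)^2) - 1/(2*(10^9+1)^3))) := by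
    norm_num
  nlinarith [hlog2]


lemma sqrt_two_lt : Real.sqrt 2 < 1.41421357 := by
  rw [show (1.41421357:ℝ) = Real.sqrt (1.41421357^2) from (Real.sqrt_sq (by norm_num)).symm]
  apply Real.sqrt_lt_sqrt (by norm_num)
  norm_num

lemma lt_sqrt_two : (1.41421356:ℝ) < Real.sqrt 2 := by
  rw [show (1.41421356:ℝ) = Real.sqrt (1.41421356^2) from (Real.sqrt_sq (by norm_num)).symm]
  apply Real.sqrt_lt_sqrt (by norm_num)
  norm_num

lemma exp_lt_helper {x q : ℝ} (h0 : 0 ≤ x) (h1 : x ≤ 1)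
    (h : (∑ m ∈ Finset.range 8, x^m / m.factorial) + x^8*9/(Nat.factorial 8 * 8) < q) :
    Real.exp x < q := by
  have := Real.exp_bound' h0 h1 (n := 8) (by norm_num)
  calc Real.exp x ≤ _ := this
    _ < q := by push_cast at h ⊢; convert h using 3 <;> norm_num

lemma E_lt : Real.exp (1 - Real.eulerMascheroniConstant/2) < 2.036826 := by
  have hγ := gamma_gt
  have h1 : (1 : ℝ) - Real.eulerMascheroniConstant/2 < 0.71139219 := by linarith
  calc Real.exp (1 - Real.eulerMascheroniConstant/2) < Real.exp 0.71139219 :=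
        Real.exp_lt_exp.2 h1
    _ < 2.036826 := by
        apply exp_lt_helper (by norm_num) (by norm_num)
        norm_num [Finset.sum_range_succ, Nat.factorial]

lemma u_lt : (2:ℝ) ^ (0.473678:ℝ) < 1.388646 := by
  rw [Real.rpow_def_of_pos (by norm_num)]
  have hl2 := Real.log_two_lt_d9
  have hl2' := Real.log_two_gt_d9
  have harg : Real.log 2 * 0.473678 < 0.3283286 := by nlinarith
  calc Real.exp (Real.log 2 * 0.473678) < Real.exp 0.3283286 :=
        Real.exp_lt_exp.2 harg
    _ < 1.388646 := by
        apply exp_lt_helper (by norm_num) (by norm_num)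
        norm_num [Finset.sum_range_succ, Nat.factorial]

lemma Rseq_diff (D : ℝ) {n : ℕ} (hn : 2 ≤ n) :
    Rseq D (n+1) - Rseq D n
      = Real.sqrt 2 * ((D ^ Nat.clog 2 n - D ^ (Nat.clog 2 n - 1)) / 2 ^ (Nat.clog 2 n - 1)) := by
  have hk : 0 < Nat.clog 2 n := Nat.clog_pos one_lt_two hn
  obtain ⟨j, hj⟩ : ∃ j, Nat.clog 2 n = j + 1 := ⟨Nat.clog 2 n - 1, (Nat.succ_pred_eq_of_pos hk).symm⟩
  have hn1 : ¬ (n ≤ 1) := by omega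
  have hn2 : ¬ (n+1 ≤ 1) := by omega
  have hub : n ≤ 2 ^ (j+1) := hj ▸ Nat.le_pow_clog one_lt_two n
  have h2j : ((2:ℝ))^j ≠ 0 := by positivity
  by_cases hcase : n < 2 ^ (j+1)
  · have hclog : Nat.clog 2 (n+1) = j + 1 := by
      apply le_antisymm
      · exact (Nat.clog_le_iff_le_pow one_lt_two).2 (by omega)
      · rw [← hj]; exact Nat.clog_mono_right 2 (by omega)
    rw [Rseq, Rseq, if_neg hn1, if_neg hn2, hclog, hj]
    simp only [Nat.add_sub_cancel]
    push_cast
    field_simp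
    ring
  · have hn2k : n = 2 ^ (j+1) := by omega
    have hclog : Nat.clog 2 (n+1) = j + 2 := by
      apply le_antisymm
      · apply (Nat.clog_le_iff_le_pow one_lt_two).2
        have h1 : 2 ≤ 2 ^ (j+1) := Nat.one_lt_two_pow_iff.2 (by omega)
        have h2 : (2:ℕ) ^ (j+2) = 2 * 2 ^ (j+1) := by ring
        omega
      · have : (2:ℕ) ^ (j+1) < n + 1 := by omega
        have := (Nat.lt_clog_iff_pow_lt one_lt_two).2 this
        omega
    rw [Rseq, Rseq, if_neg hn1, if_neg hn2, hclog, hj]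
    simp only [Nat.add_sub_cancel, show j+2-1 = j+1 from rfl]
    subst hn2k
    push_cast
    field_simp
    ring

lemma c_lt : Real.exp (1 - Real.eulerMascheroniConstant/2) * (2:ℝ) ^ (0.473678:ℝ)
    < 2 * Real.sqrt 2 := by
  have h1 : (2:ℝ) ^ (0.473678:ℝ) = Real.exp (Real.log 2 * 0.473678) :=
    Real.rpow_def_of_pos (by norm_num) _
  have h2 : 2 * Real.sqrt 2 = Real.exp (Real.log 2 * (3/2)) := by
    rw [show (3/2:ℝ) = 1 + 1/2 by norm_num, mul_add, Real.exp_add, mul_one, Real.exp_log (by norm_num)]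
    congr 1
    rw [show Real.log 2 * (1/2) = (1/2) * Real.log 2 by ring, ← Real.log_rpow (by norm_num),
      ← Real.sqrt_eq_rpow, Real.exp_log (Real.sqrt_pos.2 (by norm_num))]
  rw [h1, h2, ← Real.exp_add, Real.exp_lt_exp]
  have hγ := gamma_gt
  have hl2 := Real.log_two_gt_d9
  nlinarith

theorem Rseq_diff_lt_numeric (n : ℕ) (hn : 2 ≤ n) :
    Rseq (Real.exp (1 - Real.eulerMascheroniConstant / 2) / Real.sqrt 2) (n + 1) -
        Rseq (Real.exp (1 - Real.eulerMascheroniConstant / 2) / Real.sqrt 2) n <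
      0.87 / (n : ℝ) ^ (0.473678 : ℝ) := by
  set E : ℝ := Real.exp (1 - Real.eulerMascheroniConstant / 2) with hE
  set u : ℝ := (2:ℝ) ^ (0.473678:ℝ) with hu
  set D : ℝ := E / Real.sqrt 2 with hD
  have hs2pos : (0:ℝ) < Real.sqrt 2 := Real.sqrt_pos.2 (by norm_num)
  have hs2 : Real.sqrt 2 ≠ 0 := ne_of_gt hs2pos
  have hupos : (0:ℝ) < u := Real.rpow_pos_of_pos (by norm_num) _
  have hElt : E < 2.036826 := E_lt
  have hult : u < 1.388646 := u_lt
  have hsE : Real.sqrt 2 < E := by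
    have hγ2 := Real.eulerMascheroniConstant_lt_two_thirds
    have h2 := Real.add_one_le_exp (1 - Real.eulerMascheroniConstant / 2)
    rw [hE]
    linarith [sqrt_two_lt]
  have hDpos : 0 < D := by positivity
  rw [Rseq_diff D hn]
  have hk : 0 < Nat.clog 2 n := Nat.clog_pos one_lt_two hn
  obtain ⟨j, hj⟩ : ∃ j, Nat.clog 2 n = j + 1 := ⟨Nat.clog 2 n - 1, (Nat.succ_pred_eq_of_pos hk).symm⟩
  rw [hj]
  simp only [Nat.add_sub_cancel]
  have hub : (n:ℝ) ≤ 2 ^ (j+1) := by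
    have := hj ▸ Nat.le_pow_clog one_lt_two n
    exact_mod_cast this
  have hn0 : (0:ℝ) < n := by positivity
  have hnt_pos : (0:ℝ) < (n:ℝ) ^ (0.473678:ℝ) := Real.rpow_pos_of_pos hn0 _
  have hnt_le : (n:ℝ) ^ (0.473678:ℝ) ≤ u ^ (j+1) := by
    calc (n:ℝ) ^ (0.473678:ℝ) ≤ ((2:ℝ) ^ (j+1)) ^ (0.473678:ℝ) :=
          Real.rpow_le_rpow (le_of_lt hn0) hub (by norm_num)
      _ = u ^ (j+1) := by
          rw [hu, ← Real.rpow_natCast (2:ℝ) (j+1), ← Real.rpow_mul (by norm_num),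
            mul_comm, Real.rpow_mul (by norm_num), Real.rpow_natCast]
  -- key bound
  have hc1 : D * u / 2 < 1 := by
    have hcl := c_lt
    rw [hD, div_lt_one (by norm_num : (0:ℝ) < 2)]
    have heq : E / Real.sqrt 2 * u = E * u / Real.sqrt 2 := by ring
    rw [heq, div_lt_iff₀ hs2pos]
    calc E * u < 2 * Real.sqrt 2 := hcl
      _ = 2 * Real.sqrt 2 := rfl
  have hc0 : (0:ℝ) ≤ D * u / 2 := by positivity
  have hpow : (D * u / 2) ^ j ≤ 1 := pow_le_one₀ hc0 (le_of_lt hc1)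
  have hbase : (E - Real.sqrt 2) * u < 0.87 := by
    have h1 : (E - Real.sqrt 2) * u < (E - Real.sqrt 2) * 1.388646 :=
      mul_lt_mul_of_pos_left hult (by linarith)
    have h2 : (E - Real.sqrt 2) * 1.388646 < (2.036826 - 1.41421356) * 1.388646 := by
      have : E - Real.sqrt 2 < 2.036826 - 1.41421356 := by linarith [lt_sqrt_two]
      nlinarith
    nlinarith
  have hid : Real.sqrt 2 * ((D ^ (j+1) - D ^ j) / 2 ^ j) * u ^ (j+1)
      = ((E - Real.sqrt 2) * u) * (D * u / 2) ^ j := by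
    have hDj : (D * u / 2) ^ j = D ^ j * u ^ j / 2 ^ j := by
      rw [div_pow, mul_pow]
    rw [hDj, hD]
    have h2jne : ((2:ℝ))^j ≠ 0 := by positivity
    field_simp
    rw [pow_succ, pow_succ, mul_sub, ← mul_assoc, mul_comm (Real.sqrt 2), mul_assoc _ (E / Real.sqrt 2), div_mul_cancel₀ _ hs2]
    ring
  have hkey : Real.sqrt 2 * ((D ^ (j+1) - D ^ j) / 2 ^ j) * u ^ (j+1) < 0.87 := by
    rw [hid]
    calc ((E - Real.sqrt 2) * u) * (D * u / 2) ^ j ≤ ((E - Real.sqrt 2) * u) * 1 := by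
          apply mul_le_mul_of_nonneg_left hpow
          have : 0 < E - Real.sqrt 2 := by linarith
          positivity
      _ = (E - Real.sqrt 2) * u := by ring
      _ < 0.87 := hbase
  have hlt : Real.sqrt 2 * ((D ^ (j+1) - D ^ j) / 2 ^ j) < 0.87 / u ^ (j+1) := by
    rw [lt_div_iff₀ (by positivity : (0:ℝ) < u ^ (j+1))]
    exact hkey
  calc Real.sqrt 2 * ((D ^ (j+1) - D ^ j) / 2 ^ j) < 0.87 / u ^ (j+1) := hlt
    _ ≤ 0.87 / (n:ℝ) ^ (0.473678:ℝ) := by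
        apply div_le_div_of_nonneg_left (by norm_num) hnt_pos hnt_le
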